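/- arXiv:2410.19969 — 4 statements merged into one kernel-verified Lean document; each statement's English description precedes it below -/
import Mathlib

section
/- Let ω ∈ ℝ with sin ω ≠ 0, and suppose φ₁, φ₂ : V → ℂ are both vertex eigenfunctions of frequency ω. For each oriented edge e and j = 1,2 set a_{e,j} = φ_j(e₀), b_{e,j} = φ_j(e₁), A_{e,j} = a_{e,j}, and B_{e,j} = (b_{e,j} − a_{e,j}·cos ω)/sin ω. Then Σ_{v ∈ V} deg(v)·φ₁(v)·conj(φ₂(v)) = Σ_{e ∈ E} (a_{e,1}·conj(a_{e,2}) + b_{e,1}·conj(b_{e,2})) = Σ_{e ∈ E} (A_{e,1}·conj(A_{e,2}) + B_{e,1}·conj(B_{e,2})). -/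
open scoped BigOperators

/-- Theorem `eqdot`: for two vertex eigenfunctions of frequency `ω`
(with `sin ω ≠ 0`), the degree-weighted vertex inner product equals the sum over the
oriented edges of the endpoint products, which in turn equals the sum of the products
of the interpolation coefficients `A, B`. -/
theorem qgfft_eqdot
    {V : Type*} [Fintype V] [DecidableEq V]
    (G : SimpleGraph V) [DecidableRel G.Adj]
    (hdeg : ∀ v : V, 0 < G.degree v)
    {E : Type*} [Fintype E] (e₀ e₁ : E → V)
    (hadj : ∀ e : E, G.Adj (e₀ e) (e₁ e))
    (hinj : ∀ e e' : E, s(e₀ e, e₁ e) = s(e₀ e', e₁ e') → e = e')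
    (hsurj : ∀ x ∈ G.edgeSet, ∃ e : E, s(e₀ e, e₁ e) = x)
    (ω : ℝ) (hω : Real.sin ω ≠ 0)
    (φ₁ φ₂ : V → ℂ)
    (hφ₁ : ∀ v : V, ∑ w ∈ G.neighborFinset v, φ₁ w
      = (Real.cos ω : ℂ) * (G.degree v : ℂ) * φ₁ v)
    (hφ₂ : ∀ v : V, ∑ w ∈ G.neighborFinset v, φ₂ w
      = (Real.cos ω : ℂ) * (G.degree v : ℂ) * φ₂ v) :
    (∑ v : V, (G.degree v : ℂ) * (φ₁ v * (starRingEnd ℂ) (φ₂ v))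
      = ∑ e : E, (φ₁ (e₀ e) * (starRingEnd ℂ) (φ₂ (e₀ e))
          + φ₁ (e₁ e) * (starRingEnd ℂ) (φ₂ (e₁ e))))
    ∧ (∑ e : E, (φ₁ (e₀ e) * (starRingEnd ℂ) (φ₂ (e₀ e))
          + φ₁ (e₁ e) * (starRingEnd ℂ) (φ₂ (e₁ e)))
      = ∑ e : E, (φ₁ (e₀ e) * (starRingEnd ℂ) (φ₂ (e₀ e))
          + ((φ₁ (e₁ e) - φ₁ (e₀ e) * (Real.cos ω : ℂ)) / (Real.sin ω : ℂ))
            * (starRingEnd ℂ)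
              ((φ₂ (e₁ e) - φ₂ (e₀ e) * (Real.cos ω : ℂ)) / (Real.sin ω : ℂ)))) := by
  classical
  set c : ℂ := (Real.cos ω : ℂ) with hc
  set s : ℂ := (Real.sin ω : ℂ) with hsdef
  have hs : s ≠ 0 := by
    rw [hsdef]; exact Complex.ofReal_ne_zero.mpr hω
  -- key combinatorial lemma
  have key : ∀ f : V → V → ℂ,
      ∑ v : V, ∑ w ∈ G.neighborFinset v, f v w
        = ∑ e : E, (f (e₀ e) (e₁ e) + f (e₁ e) (e₀ e)) := by
    intro f
    have h1 : ∑ v : V, ∑ w ∈ G.neighborFinset v, f v w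
        = ∑ x ∈ (Finset.univ.sigma fun v => G.neighborFinset v), f x.1 x.2 :=
      Finset.sum_sigma' _ _ _
    have h2 : ∑ e : E, (f (e₀ e) (e₁ e) + f (e₁ e) (e₀ e))
        = ∑ p : E × Bool,
            f (if p.2 then e₀ p.1 else e₁ p.1) (if p.2 then e₁ p.1 else e₀ p.1) := by
      rw [Fintype.sum_prod_type]
      simp
    rw [h1, h2]
    refine (Finset.sum_bij
      (fun (p : E × Bool) _ =>
        (⟨if p.2 then e₀ p.1 else e₁ p.1, if p.2 then e₁ p.1 else e₀ p.1⟩ : Σ _ : V, V))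
      ?_ ?_ ?_ ?_).symm
    · intro p _
      rcases p with ⟨e, b⟩
      cases b <;>
        simp only [Bool.false_eq_true, if_false, if_true, Finset.mem_sigma,
          Finset.mem_univ, SimpleGraph.mem_neighborFinset, true_and]
      · exact (hadj e).symm
      · exact hadj e
    · intro p hp q hq h
      rcases p with ⟨e, b⟩; rcases q with ⟨e', b'⟩
      have h1 := congrArg Sigma.fst h
      have h2 := congrArg (fun x => x.2) h
      simp only at h1 h2
      cases b <;> cases b' <;>
        simp only [Bool.false_eq_true, if_false, if_true] at h1 h2
      · have : e = e' := hinj e e' (by rw [h2, h1])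
        subst this; rfl
      · exfalso
        have he : e = e' := hinj e e' (by rw [h2, h1, Sym2.eq_swap])
        subst he
        exact (hadj e).ne h1.symm
      · exfalso
        have he : e = e' := hinj e e' (by rw [h1, h2, Sym2.eq_swap])
        subst he
        exact (hadj e).ne h1
      · have : e = e' := hinj e e' (by rw [h1, h2])
        subst this; rfl
    · rintro ⟨v, w⟩ hvw
      have hadj' : G.Adj v w := by
        simpa [Finset.mem_sigma, SimpleGraph.mem_neighborFinset] using hvw
      obtain ⟨e, he⟩ := hsurj s(v, w) hadj'
      rw [Sym2.eq_iff] at he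
      rcases he with ⟨h1, h2⟩ | ⟨h1, h2⟩
      · exact ⟨(e, true), Finset.mem_univ _, by simp [h1, h2]⟩
      · exact ⟨(e, false), Finset.mem_univ _, by simp [h1, h2]⟩
    · intro p _
      rcases p with ⟨e, b⟩
      cases b <;> simp
  have part1 : ∑ v : V, (G.degree v : ℂ) * (φ₁ v * (starRingEnd ℂ) (φ₂ v))
      = ∑ e : E, (φ₁ (e₀ e) * (starRingEnd ℂ) (φ₂ (e₀ e))
          + φ₁ (e₁ e) * (starRingEnd ℂ) (φ₂ (e₁ e))) := by
    have := key (fun v _ => φ₁ v * (starRingEnd ℂ) (φ₂ v))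
    simp only [Finset.sum_const, SimpleGraph.card_neighborFinset_eq_degree,
      nsmul_eq_mul] at this
    exact this
  refine ⟨part1, ?_⟩
  -- cross term
  have hcross : ∑ e : E, (φ₁ (e₁ e) * (starRingEnd ℂ) (φ₂ (e₀ e))
        + φ₁ (e₀ e) * (starRingEnd ℂ) (φ₂ (e₁ e)))
      = c * ∑ v : V, (G.degree v : ℂ) * (φ₁ v * (starRingEnd ℂ) (φ₂ v)) := by
    have := (key (fun v w => φ₁ w * (starRingEnd ℂ) (φ₂ v))).symm
    rw [this]
    rw [Finset.mul_sum]
    refine Finset.sum_congr rfl fun v _ => ?_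
    rw [← Finset.sum_mul, hφ₁ v]
    ring
  -- same-vertex sum
  have hsame : ∑ e : E, (φ₁ (e₀ e) * (starRingEnd ℂ) (φ₂ (e₀ e))
        + φ₁ (e₁ e) * (starRingEnd ℂ) (φ₂ (e₁ e)))
      = ∑ v : V, (G.degree v : ℂ) * (φ₁ v * (starRingEnd ℂ) (φ₂ v)) := part1.symm
  have hsq : s ^ 2 = 1 - c ^ 2 := by
    rw [hc, hsdef, ← Complex.ofReal_pow, ← Complex.ofReal_pow, ← Complex.ofReal_one,
      ← Complex.ofReal_sub, Complex.ofReal_inj]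
    exact Real.sin_sq ω
  -- per-edge identity
  have hedge : ∀ e : E,
      (φ₁ (e₀ e) * (starRingEnd ℂ) (φ₂ (e₀ e))
          + ((φ₁ (e₁ e) - φ₁ (e₀ e) * c) / s)
            * (starRingEnd ℂ) ((φ₂ (e₁ e) - φ₂ (e₀ e) * c) / s))
        - (φ₁ (e₀ e) * (starRingEnd ℂ) (φ₂ (e₀ e))
          + φ₁ (e₁ e) * (starRingEnd ℂ) (φ₂ (e₁ e)))
      = (c / s ^ 2) *
          (c * (φ₁ (e₀ e) * (starRingEnd ℂ) (φ₂ (e₀ e))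
              + φ₁ (e₁ e) * (starRingEnd ℂ) (φ₂ (e₁ e)))
            - (φ₁ (e₁ e) * (starRingEnd ℂ) (φ₂ (e₀ e))
              + φ₁ (e₀ e) * (starRingEnd ℂ) (φ₂ (e₁ e)))) := by
    intro e
    have hconj : (starRingEnd ℂ) ((φ₂ (e₁ e) - φ₂ (e₀ e) * c) / s)
        = ((starRingEnd ℂ) (φ₂ (e₁ e)) - (starRingEnd ℂ) (φ₂ (e₀ e)) * c) / s := by
      rw [map_div₀, map_sub, map_mul, hc, hsdef, Complex.conj_ofReal, Complex.conj_ofReal]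
    rw [hconj]
    field_simp
    linear_combination (-(φ₁ (e₁ e) * (starRingEnd ℂ) (φ₂ (e₁ e)))) * hsq
  -- conclude part 2
  have hdiff : (∑ e : E, (φ₁ (e₀ e) * (starRingEnd ℂ) (φ₂ (e₀ e))
          + ((φ₁ (e₁ e) - φ₁ (e₀ e) * c) / s)
            * (starRingEnd ℂ) ((φ₂ (e₁ e) - φ₂ (e₀ e) * c) / s)))
        - (∑ e : E, (φ₁ (e₀ e) * (starRingEnd ℂ) (φ₂ (e₀ e))
          + φ₁ (e₁ e) * (starRingEnd ℂ) (φ₂ (e₁ e)))) = 0 := by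
    rw [← Finset.sum_sub_distrib]
    calc ∑ e : E, _ = ∑ e : E, (c / s ^ 2) *
          (c * (φ₁ (e₀ e) * (starRingEnd ℂ) (φ₂ (e₀ e))
              + φ₁ (e₁ e) * (starRingEnd ℂ) (φ₂ (e₁ e)))
            - (φ₁ (e₁ e) * (starRingEnd ℂ) (φ₂ (e₀ e))
              + φ₁ (e₀ e) * (starRingEnd ℂ) (φ₂ (e₁ e)))) :=
        Finset.sum_congr rfl fun e _ => hedge e
      _ = (c / s ^ 2) * (c * (∑ e : E, (φ₁ (e₀ e) * (starRingEnd ℂ) (φ₂ (e₀ e))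
              + φ₁ (e₁ e) * (starRingEnd ℂ) (φ₂ (e₁ e))))
            - ∑ e : E, (φ₁ (e₁ e) * (starRingEnd ℂ) (φ₂ (e₀ e))
              + φ₁ (e₀ e) * (starRingEnd ℂ) (φ₂ (e₁ e)))) := by
        rw [Finset.mul_sum, ← Finset.sum_sub_distrib, Finset.mul_sum]
      _ = 0 := by rw [hsame, hcross]; ring
  exact (sub_eq_zero.mp hdiff).symm
end

section
/- Let ω ∈ ℝ with ω > 0 and sin ω ≠ 0, and suppose φ₁, φ₂ : V → ℂ are both vertex eigenfunctions of frequency ω. For each oriented edge e and j = 1,2 set A_{e,j} = φ_j(e₀) and B_{e,j} = (φ_j(e₁) − φ_j(e₀)·cos ω)/sin ω, and let y_{e,j}(x) = A_{e,j}·cos(ωx) + B_{e,j}·sin(ωx). Then Σ_{e ∈ E} ∫₀¹ y_{e,1}(x)·conj(y_{e,2}(x)) dx = (1/2)·Σ_{e ∈ E} (A_{e,1}·conj(A_{e,2}) + B_{e,1}·conj(B_{e,2})). -/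
open scoped BigOperators

section QgfftAux

open intervalIntegral Real

lemma qgfft_cos_sq (ω : ℝ) (hω : ω ≠ 0) :
    ∫ x in (0:ℝ)..1, Real.cos (ω*x) ^ 2 = 1/2 + Real.sin ω * Real.cos ω / (2*ω) := by
  rw [intervalIntegral.integral_comp_mul_left (fun y => Real.cos y ^ 2) hω]
  simp [integral_cos_sq]
  field_simp
  ring

lemma qgfft_sin_sq (ω : ℝ) (hω : ω ≠ 0) :
    ∫ x in (0:ℝ)..1, Real.sin (ω*x) ^ 2 = 1/2 - Real.sin ω * Real.cos ω / (2*ω) := by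
  rw [intervalIntegral.integral_comp_mul_left (fun y => Real.sin y ^ 2) hω]
  simp [integral_sin_sq]
  field_simp
  ring

lemma qgfft_cos_sin (ω : ℝ) (hω : ω ≠ 0) :
    ∫ x in (0:ℝ)..1, Real.cos (ω*x) * Real.sin (ω*x) = Real.sin ω ^ 2 / (2*ω) := by
  simp_rw [mul_comm (Real.cos _)]
  rw [intervalIntegral.integral_comp_mul_left (fun y => Real.sin y * Real.cos y) hω]
  simp [integral_sin_mul_cos₁]
  field_simp

lemma qgfft_edge_integral (ω : ℝ) (hω : ω ≠ 0) (A₁ B₁ A₂ B₂ : ℂ) :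
    ∫ x in (0:ℝ)..1,
      (A₁ * (Real.cos (ω*x) : ℂ) + B₁ * (Real.sin (ω*x) : ℂ))
        * (A₂ * (Real.cos (ω*x) : ℂ) + B₂ * (Real.sin (ω*x) : ℂ))
    = (1/2) * (A₁*A₂ + B₁*B₂)
      + (1/(2*(ω:ℂ))) * ((Real.sin ω : ℂ) * (Real.cos ω : ℂ) * (A₁*A₂ - B₁*B₂)
          + (Real.sin ω : ℂ)^2 * (A₁*B₂ + B₁*A₂)) := by
  have hfun : (fun x => (A₁ * (Real.cos (ω*x) : ℂ) + B₁ * (Real.sin (ω*x) : ℂ))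
        * (A₂ * (Real.cos (ω*x) : ℂ) + B₂ * (Real.sin (ω*x) : ℂ)))
      = fun x => A₁*A₂ * ((Real.cos (ω*x) ^ 2 : ℝ) : ℂ)
          + ((A₁*B₂ + B₁*A₂) * ((Real.cos (ω*x) * Real.sin (ω*x) : ℝ) : ℂ)
            + B₁*B₂ * ((Real.sin (ω*x) ^ 2 : ℝ) : ℂ)) := by
    funext x; push_cast; ring
  have hc : Continuous fun x : ℝ => A₁*A₂ * ((Real.cos (ω*x) ^ 2 : ℝ) : ℂ) := by fun_prop
  have hc2 : Continuous fun x : ℝ =>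
      (A₁*B₂ + B₁*A₂) * ((Real.cos (ω*x) * Real.sin (ω*x) : ℝ) : ℂ) := by fun_prop
  have hc3 : Continuous fun x : ℝ => B₁*B₂ * ((Real.sin (ω*x) ^ 2 : ℝ) : ℂ) := by fun_prop
  rw [hfun, intervalIntegral.integral_add (hc.intervalIntegrable _ _)
      ((hc2.add hc3).intervalIntegrable _ _) (g := fun x => (A₁*B₂ + B₁*A₂) * ((Real.cos (ω*x) * Real.sin (ω*x) : ℝ) : ℂ)
        + B₁*B₂ * ((Real.sin (ω*x) ^ 2 : ℝ) : ℂ)),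
    intervalIntegral.integral_add (hc2.intervalIntegrable _ _) (hc3.intervalIntegrable _ _),
    intervalIntegral.integral_const_mul, intervalIntegral.integral_const_mul,
    intervalIntegral.integral_const_mul, intervalIntegral.integral_ofReal,
    intervalIntegral.integral_ofReal, intervalIntegral.integral_ofReal,
    qgfft_cos_sq ω hω, qgfft_sin_sq ω hω, qgfft_cos_sin ω hω]
  have hωc : (ω : ℂ) ≠ 0 := Complex.ofReal_ne_zero.mpr hω
  push_cast
  field_simp
  ring

lemma qgfft_extra (c s p1u p1v q2u q2v : ℂ) (hs : s ≠ 0) (hcs : s^2 + c^2 = 1) :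
    s * c * (p1u*q2u - (p1v - p1u*c)/s * ((q2v - q2u*c)/s))
      + s^2 * (p1u * ((q2v - q2u*c)/s) + (p1v - p1u*c)/s * q2u)
    = (p1v*q2u + p1u*q2v - c*(p1u*q2u + p1v*q2v)) / s := by
  field_simp
  linear_combination (p1u*q2v + p1v*q2u - c*p1u*q2u) * hcs

lemma qgfft_double_count {V : Type*} [Fintype V] [DecidableEq V]
    (G : SimpleGraph V) [DecidableRel G.Adj]
    {E : Type*} [Fintype E] (e₀ e₁ : E → V)
    (hadj : ∀ e : E, G.Adj (e₀ e) (e₁ e))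
    (hinj : ∀ e e' : E, s(e₀ e, e₁ e) = s(e₀ e', e₁ e') → e = e')
    (hsurj : ∀ x ∈ G.edgeSet, ∃ e : E, s(e₀ e, e₁ e) = x)
    (g : V → V → ℂ) (hg : ∀ u v, g u v = g v u) :
    2 * ∑ e : E, g (e₀ e) (e₁ e) = ∑ u : V, ∑ v ∈ G.neighborFinset u, g u v := by
  have key : ∑ p : E × Bool, g (e₀ p.1) (e₁ p.1)
      = ∑ p ∈ Finset.univ.filter (fun p : V × V => G.Adj p.1 p.2), g p.1 p.2 := by
    refine Finset.sum_bij
      (fun p _ => if p.2 then (e₁ p.1, e₀ p.1) else (e₀ p.1, e₁ p.1)) ?_ ?_ ?_ ?_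
    · rintro ⟨e, b⟩ -
      cases b <;> simp [hadj e, (hadj e).symm]
    · rintro ⟨e, b⟩ - ⟨e', b'⟩ -
      have hne : e₀ e ≠ e₁ e := (hadj e).ne
      have hne' : e₀ e' ≠ e₁ e' := (hadj e').ne
      cases b <;> cases b' <;> intro h <;> simp at h
      · obtain ⟨h1, h2⟩ := h
        have := hinj e e' (by rw [h1, h2])
        simp [this]
      · obtain ⟨h1, h2⟩ := h
        have heq : e = e' := hinj e e' (by rw [h1, h2, Sym2.eq_swap])
        subst heq
        exact absurd h1 hne
      · obtain ⟨h1, h2⟩ := h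
        have heq : e = e' := hinj e e' (by rw [h2, h1, Sym2.eq_swap])
        subst heq
        exact absurd h1 hne.symm
      · obtain ⟨h1, h2⟩ := h
        have := hinj e e' (by rw [h1, h2])
        simp [this]
    · rintro ⟨u, v⟩ hp
      simp only [Finset.mem_filter, Finset.mem_univ, true_and] at hp
      obtain ⟨e, he⟩ := hsurj s(u, v) (G.mem_edgeSet.mpr hp)
      rw [Sym2.eq_iff] at he
      rcases he with ⟨h1, h2⟩ | ⟨h1, h2⟩
      · exact ⟨(e, false), Finset.mem_univ _, by simp [h1, h2]⟩
      · exact ⟨(e, true), Finset.mem_univ _, by simp [h1, h2]⟩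
    · rintro ⟨e, b⟩ -
      cases b <;> simp [hg]
  have lhs : ∑ p : E × Bool, g (e₀ p.1) (e₁ p.1) = 2 * ∑ e : E, g (e₀ e) (e₁ e) := by
    rw [Fintype.sum_prod_type]
    simp [two_mul]
    rw [← Finset.sum_add_distrib]
  have rhs : ∑ p ∈ Finset.univ.filter (fun p : V × V => G.Adj p.1 p.2), g p.1 p.2
      = ∑ u : V, ∑ v ∈ G.neighborFinset u, g u v := by
    rw [Finset.sum_filter, Fintype.sum_prod_type]
    refine Finset.sum_congr rfl fun u _ => ?_
    rw [SimpleGraph.neighborFinset_eq_filter, Finset.sum_filter]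
  rw [← lhs, key, rhs]

lemma qgfft_sum_zero {V : Type*} [Fintype V] [DecidableEq V]
    (G : SimpleGraph V) [DecidableRel G.Adj] (c : ℝ) (φ₁ Φ₂ : V → ℂ)
    (hφ₁ : ∀ v : V, ∑ w ∈ G.neighborFinset v, φ₁ w = (c:ℂ) * (G.degree v : ℂ) * φ₁ v)
    (hΦ₂ : ∀ v : V, ∑ w ∈ G.neighborFinset v, Φ₂ w = (c:ℂ) * (G.degree v : ℂ) * Φ₂ v) :
    ∑ u : V, ∑ v ∈ G.neighborFinset u,
      (φ₁ v * Φ₂ u + φ₁ u * Φ₂ v - (c:ℂ) * (φ₁ u * Φ₂ u + φ₁ v * Φ₂ v)) = 0 := by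
  have hswap : ∑ u : V, ∑ v ∈ G.neighborFinset u, φ₁ v * Φ₂ v
      = ∑ u : V, (G.degree u : ℂ) * (φ₁ u * Φ₂ u) := by
    simp_rw [SimpleGraph.neighborFinset_eq_filter, Finset.sum_filter]
    rw [Finset.sum_comm]
    refine Finset.sum_congr rfl fun v _ => ?_
    rw [← Finset.sum_filter, Finset.sum_const]
    have h : Finset.univ.filter (fun u => G.Adj u v) = G.neighborFinset v := by
      ext u; simp [SimpleGraph.adj_comm]
    rw [h, SimpleGraph.card_neighborFinset_eq_degree, nsmul_eq_mul]
  have inner : ∀ u : V, ∑ v ∈ G.neighborFinset u,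
      (φ₁ v * Φ₂ u + φ₁ u * Φ₂ v - (c:ℂ) * (φ₁ u * Φ₂ u + φ₁ v * Φ₂ v))
      = (c:ℂ) * (G.degree u : ℂ) * (φ₁ u * Φ₂ u)
        - (c:ℂ) * ∑ v ∈ G.neighborFinset u, φ₁ v * Φ₂ v := by
    intro u
    rw [Finset.sum_sub_distrib, Finset.sum_add_distrib, ← Finset.sum_mul, hφ₁ u,
      ← Finset.mul_sum, hΦ₂ u, ← Finset.mul_sum, Finset.sum_add_distrib,
      Finset.sum_const, SimpleGraph.card_neighborFinset_eq_degree, nsmul_eq_mul]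
    ring
  simp_rw [inner]
  rw [Finset.sum_sub_distrib, ← Finset.mul_sum, hswap, Finset.mul_sum]
  simp [mul_assoc]

end QgfftAux

/-- Theorem `inprod2` for eigenfunctions built from vertex data:
the `L²(𝒢)` inner product of the two edgewise eigenfunctions equals half the sum of the
products of their coefficients. -/
theorem qgfft_inprod2
    {V : Type*} [Fintype V] [DecidableEq V]
    (G : SimpleGraph V) [DecidableRel G.Adj]
    (hdeg : ∀ v : V, 0 < G.degree v)
    {E : Type*} [Fintype E] (e₀ e₁ : E → V)
    (hadj : ∀ e : E, G.Adj (e₀ e) (e₁ e))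
    (hinj : ∀ e e' : E, s(e₀ e, e₁ e) = s(e₀ e', e₁ e') → e = e')
    (hsurj : ∀ x ∈ G.edgeSet, ∃ e : E, s(e₀ e, e₁ e) = x)
    (ω : ℝ) (hωpos : 0 < ω) (hω : Real.sin ω ≠ 0)
    (φ₁ φ₂ : V → ℂ)
    (hφ₁ : ∀ v : V, ∑ w ∈ G.neighborFinset v, φ₁ w
      = (Real.cos ω : ℂ) * (G.degree v : ℂ) * φ₁ v)
    (hφ₂ : ∀ v : V, ∑ w ∈ G.neighborFinset v, φ₂ w
      = (Real.cos ω : ℂ) * (G.degree v : ℂ) * φ₂ v) :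
    ∑ e : E, ∫ x in (0:ℝ)..1,
        (φ₁ (e₀ e) * (Real.cos (ω * x) : ℂ)
          + ((φ₁ (e₁ e) - φ₁ (e₀ e) * (Real.cos ω : ℂ)) / (Real.sin ω : ℂ))
            * (Real.sin (ω * x) : ℂ))
        * (starRingEnd ℂ)
          (φ₂ (e₀ e) * (Real.cos (ω * x) : ℂ)
            + ((φ₂ (e₁ e) - φ₂ (e₀ e) * (Real.cos ω : ℂ)) / (Real.sin ω : ℂ))
              * (Real.sin (ω * x) : ℂ))
    = (1 / 2 : ℂ) * ∑ e : E,
        (φ₁ (e₀ e) * (starRingEnd ℂ) (φ₂ (e₀ e))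
          + ((φ₁ (e₁ e) - φ₁ (e₀ e) * (Real.cos ω : ℂ)) / (Real.sin ω : ℂ))
            * (starRingEnd ℂ)
              ((φ₂ (e₁ e) - φ₂ (e₀ e) * (Real.cos ω : ℂ)) / (Real.sin ω : ℂ))) := by
  have hω0 : ω ≠ 0 := ne_of_gt hωpos
  have hωC : (ω : ℂ) ≠ 0 := Complex.ofReal_ne_zero.mpr hω0
  have hsC : ((Real.sin ω : ℂ)) ≠ 0 := Complex.ofReal_ne_zero.mpr hω
  have hcs : (Real.sin ω : ℂ)^2 + (Real.cos ω : ℂ)^2 = 1 := by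
    rw [← Complex.ofReal_pow, ← Complex.ofReal_pow, ← Complex.ofReal_add,
      Real.sin_sq_add_cos_sq, Complex.ofReal_one]
  have hg : ∀ u v : V, (φ₁ v * (starRingEnd ℂ) (φ₂ u) + φ₁ u * (starRingEnd ℂ) (φ₂ v)
      - (Real.cos ω : ℂ) * (φ₁ u * (starRingEnd ℂ) (φ₂ u) + φ₁ v * (starRingEnd ℂ) (φ₂ v)))
      = (φ₁ u * (starRingEnd ℂ) (φ₂ v) + φ₁ v * (starRingEnd ℂ) (φ₂ u)
      - (Real.cos ω : ℂ) * (φ₁ v * (starRingEnd ℂ) (φ₂ v) + φ₁ u * (starRingEnd ℂ) (φ₂ u))) := by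
    intro u v; ring
  -- per-edge integral
  have hint : ∀ e : E, (∫ x in (0:ℝ)..1,
        (φ₁ (e₀ e) * (Real.cos (ω * x) : ℂ)
          + ((φ₁ (e₁ e) - φ₁ (e₀ e) * (Real.cos ω : ℂ)) / (Real.sin ω : ℂ))
            * (Real.sin (ω * x) : ℂ))
        * (starRingEnd ℂ)
          (φ₂ (e₀ e) * (Real.cos (ω * x) : ℂ)
            + ((φ₂ (e₁ e) - φ₂ (e₀ e) * (Real.cos ω : ℂ)) / (Real.sin ω : ℂ))
              * (Real.sin (ω * x) : ℂ)))
      = (1/2) * (φ₁ (e₀ e) * (starRingEnd ℂ) (φ₂ (e₀ e))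
          + ((φ₁ (e₁ e) - φ₁ (e₀ e) * (Real.cos ω : ℂ)) / (Real.sin ω : ℂ))
            * (starRingEnd ℂ) ((φ₂ (e₁ e) - φ₂ (e₀ e) * (Real.cos ω : ℂ)) / (Real.sin ω : ℂ)))
        + (1/(2*(ω:ℂ))) * ((φ₁ (e₁ e) * (starRingEnd ℂ) (φ₂ (e₀ e))
            + φ₁ (e₀ e) * (starRingEnd ℂ) (φ₂ (e₁ e))
            - (Real.cos ω : ℂ) * (φ₁ (e₀ e) * (starRingEnd ℂ) (φ₂ (e₀ e))
              + φ₁ (e₁ e) * (starRingEnd ℂ) (φ₂ (e₁ e)))) / (Real.sin ω : ℂ)) := by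
    intro e
    have hconj : ∀ x : ℝ, (starRingEnd ℂ)
          (φ₂ (e₀ e) * (Real.cos (ω * x) : ℂ)
            + ((φ₂ (e₁ e) - φ₂ (e₀ e) * (Real.cos ω : ℂ)) / (Real.sin ω : ℂ))
              * (Real.sin (ω * x) : ℂ))
        = (starRingEnd ℂ) (φ₂ (e₀ e)) * (Real.cos (ω * x) : ℂ)
          + (((starRingEnd ℂ) (φ₂ (e₁ e)) - (starRingEnd ℂ) (φ₂ (e₀ e)) * (Real.cos ω : ℂ))
              / (Real.sin ω : ℂ)) * (Real.sin (ω * x) : ℂ) := by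
      intro x
      simp only [map_add, map_mul, map_div₀, map_sub, Complex.conj_ofReal]
    have hBconj : (starRingEnd ℂ) ((φ₂ (e₁ e) - φ₂ (e₀ e) * (Real.cos ω : ℂ)) / (Real.sin ω : ℂ))
        = ((starRingEnd ℂ) (φ₂ (e₁ e)) - (starRingEnd ℂ) (φ₂ (e₀ e)) * (Real.cos ω : ℂ))
            / (Real.sin ω : ℂ) := by
      simp only [map_div₀, map_sub, map_mul, Complex.conj_ofReal]
    simp_rw [hconj, hBconj]
    rw [qgfft_edge_integral ω hω0]
    linear_combination (1/(2*(ω:ℂ)))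
      * qgfft_extra (Real.cos ω : ℂ) (Real.sin ω : ℂ) (φ₁ (e₀ e)) (φ₁ (e₁ e))
          ((starRingEnd ℂ) (φ₂ (e₀ e))) ((starRingEnd ℂ) (φ₂ (e₁ e))) hsC hcs
  -- sum of g over edges is zero
  have hΦ₂ : ∀ v : V, ∑ w ∈ G.neighborFinset v, (starRingEnd ℂ) (φ₂ w)
      = ((Real.cos ω : ℝ) : ℂ) * (G.degree v : ℂ) * (starRingEnd ℂ) (φ₂ v) := by
    intro v
    rw [← map_sum, hφ₂ v, map_mul, map_mul, Complex.conj_ofReal, map_natCast]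
  have hzero : ∑ e : E, (φ₁ (e₁ e) * (starRingEnd ℂ) (φ₂ (e₀ e))
            + φ₁ (e₀ e) * (starRingEnd ℂ) (φ₂ (e₁ e))
            - (Real.cos ω : ℂ) * (φ₁ (e₀ e) * (starRingEnd ℂ) (φ₂ (e₀ e))
              + φ₁ (e₁ e) * (starRingEnd ℂ) (φ₂ (e₁ e)))) = 0 := by
    have h2 := qgfft_double_count G e₀ e₁ hadj hinj hsurj
      (fun u v => φ₁ v * (starRingEnd ℂ) (φ₂ u) + φ₁ u * (starRingEnd ℂ) (φ₂ v)
        - (Real.cos ω : ℂ) * (φ₁ u * (starRingEnd ℂ) (φ₂ u) + φ₁ v * (starRingEnd ℂ) (φ₂ v)))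
      (fun u v => by rw [hg u v])
    have h0 := qgfft_sum_zero G (Real.cos ω) φ₁ (fun v => (starRingEnd ℂ) (φ₂ v))
      hφ₁ hΦ₂
    have h2' : (2 : ℂ) * ∑ e : E, (φ₁ (e₁ e) * (starRingEnd ℂ) (φ₂ (e₀ e))
            + φ₁ (e₀ e) * (starRingEnd ℂ) (φ₂ (e₁ e))
            - (Real.cos ω : ℂ) * (φ₁ (e₀ e) * (starRingEnd ℂ) (φ₂ (e₀ e))
              + φ₁ (e₁ e) * (starRingEnd ℂ) (φ₂ (e₁ e)))) = 0 := by
      rw [h2]; exact h0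
    exact (mul_eq_zero.mp h2').resolve_left two_ne_zero
  rw [Finset.sum_congr rfl fun e _ => hint e, Finset.sum_add_distrib,
    ← Finset.mul_sum, ← Finset.mul_sum, ← Finset.sum_div, hzero]
  simp
end

section
/- Let ω ∈ ℝ with ω > 0 and sin ω ≠ 0, let m be a nonnegative integer, and suppose φ₁, φ₂ : V → ℂ are both vertex eigenfunctions of frequency ω. For each oriented edge e and j = 1,2 set A_{e,j} = φ_j(e₀) and B_{e,j} = (φ_j(e₁) − φ_j(e₀)·cos ω)/sin ω. Then the frequency-shifted family has the same mutual inner product as the original: Σ_{e ∈ E} ∫₀¹ (A_{e,1}·cos((ω+2mπ)x) + B_{e,1}·sin((ω+2mπ)x))·conj(A_{e,2}·cos((ω+2mπ)x) + B_{e,2}·sin((ω+2mπ)x)) dx = Σ_{e ∈ E} ∫₀¹ (A_{e,1}·cos(ωx) + B_{e,1}·sin(ωx))·conj(A_{e,2}·cos(ωx) + B_{e,2}·sin(ωx)) dx. In particular, if the frequency-ω family is orthonormal then so is the frequency-(ω+2mπ) family. -/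
open scoped BigOperators
open intervalIntegral

private lemma int_cossq (ν : ℝ) (hν : ν ≠ 0) :
    ∫ x in (0:ℝ)..1, Real.cos (ν * x) ^ 2
      = 1/2 + Real.sin ν * Real.cos ν / (2*ν) := by
  rw [intervalIntegral.integral_comp_mul_left (fun x => Real.cos x ^ 2) hν,
    integral_cos_sq]
  simp only [mul_zero, mul_one, smul_eq_mul]
  field_simp
  simp only [Real.sin_zero, Real.cos_zero]
  ring

private lemma int_sinsq (ν : ℝ) (hν : ν ≠ 0) :
    ∫ x in (0:ℝ)..1, Real.sin (ν * x) ^ 2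
      = 1/2 - Real.sin ν * Real.cos ν / (2*ν) := by
  rw [intervalIntegral.integral_comp_mul_left (fun x => Real.sin x ^ 2) hν,
    integral_sin_sq]
  simp only [mul_zero, mul_one, smul_eq_mul]
  field_simp
  simp only [Real.sin_zero, Real.cos_zero]
  ring

private lemma int_sincos (ν : ℝ) (hν : ν ≠ 0) :
    ∫ x in (0:ℝ)..1, Real.sin (ν * x) * Real.cos (ν * x)
      = Real.sin ν ^ 2 / (2*ν) := by
  rw [intervalIntegral.integral_comp_mul_left (fun x => Real.sin x * Real.cos x) hν,
    integral_sin_mul_cos₁]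
  simp only [mul_zero, mul_one, smul_eq_mul]
  field_simp
  simp only [Real.sin_zero]
  ring

private lemma int_main (ν : ℝ) (hν : ν ≠ 0) (A B A' B' : ℂ) :
    (∫ x in (0:ℝ)..1, (A * (Real.cos (ν * x) : ℂ) + B * (Real.sin (ν * x) : ℂ))
        * (A' * (Real.cos (ν * x) : ℂ) + B' * (Real.sin (ν * x) : ℂ)))
    = A * A' * ((1/2 + Real.sin ν * Real.cos ν / (2*ν) : ℝ) : ℂ)
      + (A * B' + B * A') * ((Real.sin ν ^ 2 / (2*ν) : ℝ) : ℂ)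
      + B * B' * ((1/2 - Real.sin ν * Real.cos ν / (2*ν) : ℝ) : ℂ) := by
  have h1 : ∀ x : ℝ,
      (A * (Real.cos (ν * x) : ℂ) + B * (Real.sin (ν * x) : ℂ))
        * (A' * (Real.cos (ν * x) : ℂ) + B' * (Real.sin (ν * x) : ℂ))
      = A * A' * ((Real.cos (ν * x) ^ 2 : ℝ) : ℂ)
        + (A * B' + B * A') * ((Real.sin (ν * x) * Real.cos (ν * x) : ℝ) : ℂ)
        + B * B' * ((Real.sin (ν * x) ^ 2 : ℝ) : ℂ) := by
    intro x; push_cast; ring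
  simp_rw [h1]
  rw [intervalIntegral.integral_add, intervalIntegral.integral_add,
    intervalIntegral.integral_const_mul, intervalIntegral.integral_const_mul,
    intervalIntegral.integral_const_mul, intervalIntegral.integral_ofReal,
    intervalIntegral.integral_ofReal, intervalIntegral.integral_ofReal,
    int_cossq ν hν, int_sincos ν hν, int_sinsq ν hν]
  all_goals apply Continuous.intervalIntegrable
  all_goals fun_prop

private lemma sum_edges_eq {V : Type*} [Fintype V] [DecidableEq V]
    (G : SimpleGraph V) [DecidableRel G.Adj]
    {E : Type*} [Fintype E] (e₀ e₁ : E → V)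
    (hadj : ∀ e : E, G.Adj (e₀ e) (e₁ e))
    (hinj : ∀ e e' : E, s(e₀ e, e₁ e) = s(e₀ e', e₁ e') → e = e')
    (hsurj : ∀ x ∈ G.edgeSet, ∃ e : E, s(e₀ e, e₁ e) = x)
    (g : V → V → ℂ) :
    ∑ e : E, (g (e₀ e) (e₁ e) + g (e₁ e) (e₀ e))
      = ∑ v : V, ∑ w ∈ G.neighborFinset v, g v w := by
  have hRHS : ∑ v : V, ∑ w ∈ G.neighborFinset v, g v w
      = ∑ p ∈ Finset.univ.filter (fun p : V × V => G.Adj p.1 p.2), g p.1 p.2 := by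
    rw [Finset.sum_filter, Fintype.sum_prod_type]
    refine Finset.sum_congr rfl fun v _ => ?_
    rw [SimpleGraph.neighborFinset_eq_filter, Finset.sum_filter]
  have hLHS : ∑ e : E, (g (e₀ e) (e₁ e) + g (e₁ e) (e₀ e))
      = ∑ x : E × Bool,
          g (if x.2 then e₀ x.1 else e₁ x.1) (if x.2 then e₁ x.1 else e₀ x.1) := by
    rw [Fintype.sum_prod_type]
    refine Finset.sum_congr rfl fun e _ => ?_
    simp [Fintype.sum_bool]
  rw [hLHS, hRHS]
  refine Finset.sum_bij
    (fun x _ => ((if x.2 then e₀ x.1 else e₁ x.1), (if x.2 then e₁ x.1 else e₀ x.1)))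
    ?_ ?_ ?_ ?_
  · rintro ⟨e, b⟩ -
    cases b <;> simp [Finset.mem_filter, hadj e, (hadj e).symm]
  · rintro ⟨e, b⟩ hm ⟨e', b'⟩ hm' h
    have h1 := congrArg Prod.fst h
    have h2 := congrArg Prod.snd h
    have hne := (hadj e).ne
    cases b <;> cases b' <;> simp only [reduceIte, Bool.false_eq_true, if_false, if_true] at h1 h2
    · have he : e = e' := hinj e e' (by rw [h1, h2])
      rw [he]
    · exfalso
      have he : e = e' := hinj e e' (by rw [h1, h2, Sym2.eq_swap])
      subst he
      exact hne h2
    · exfalso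
      have he : e = e' := hinj e e' (by rw [h1, h2, Sym2.eq_swap])
      subst he
      exact hne h1
    · have he : e = e' := hinj e e' (by rw [h1, h2])
      rw [he]
  · rintro ⟨v, w⟩ hp
    rw [Finset.mem_filter] at hp
    obtain ⟨e, he⟩ := hsurj s(v, w) hp.2
    rw [Sym2.eq_iff] at he
    rcases he with ⟨h1, h2⟩ | ⟨h1, h2⟩
    · exact ⟨(e, true), Finset.mem_univ _, by simp [h1, h2]⟩
    · exact ⟨(e, false), Finset.mem_univ _, by simp [h1, h2]⟩
  · rintro ⟨e, b⟩ -
    rfl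

private lemma keyS {V : Type*} [Fintype V] [DecidableEq V]
    (G : SimpleGraph V) [DecidableRel G.Adj]
    {E : Type*} [Fintype E] (e₀ e₁ : E → V)
    (hadj : ∀ e : E, G.Adj (e₀ e) (e₁ e))
    (hinj : ∀ e e' : E, s(e₀ e, e₁ e) = s(e₀ e', e₁ e') → e = e')
    (hsurj : ∀ x ∈ G.edgeSet, ∃ e : E, s(e₀ e, e₁ e) = x)
    (ω : ℝ) (φ₁ φ₂ : V → ℂ)
    (hφ₂ : ∀ v : V, ∑ w ∈ G.neighborFinset v, φ₂ w
      = (Real.cos ω : ℂ) * (G.degree v : ℂ) * φ₂ v) :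
    ∑ e : E, (φ₁ (e₀ e) * (starRingEnd ℂ) (φ₂ (e₁ e))
        + φ₁ (e₁ e) * (starRingEnd ℂ) (φ₂ (e₀ e))
        - (Real.cos ω : ℂ) * (φ₁ (e₀ e) * (starRingEnd ℂ) (φ₂ (e₀ e))
            + φ₁ (e₁ e) * (starRingEnd ℂ) (φ₂ (e₁ e)))) = 0 := by
  have hmix := sum_edges_eq G e₀ e₁ hadj hinj hsurj
    (fun v w => φ₁ v * (starRingEnd ℂ) (φ₂ w))
  have hdiag := sum_edges_eq G e₀ e₁ hadj hinj hsurj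
    (fun v w => φ₁ v * (starRingEnd ℂ) (φ₂ v))
  have hmix' : ∑ v : V, ∑ w ∈ G.neighborFinset v, φ₁ v * (starRingEnd ℂ) (φ₂ w)
      = (Real.cos ω : ℂ)
          * ∑ v : V, (G.degree v : ℂ) * (φ₁ v * (starRingEnd ℂ) (φ₂ v)) := by
    rw [Finset.mul_sum]
    refine Finset.sum_congr rfl fun v _ => ?_
    rw [← Finset.mul_sum, ← map_sum, hφ₂ v]
    simp only [map_mul, Complex.conj_ofReal, Complex.conj_natCast]
    ring
  have hdiag' : ∑ v : V, ∑ w ∈ G.neighborFinset v, φ₁ v * (starRingEnd ℂ) (φ₂ v)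
      = ∑ v : V, (G.degree v : ℂ) * (φ₁ v * (starRingEnd ℂ) (φ₂ v)) := by
    refine Finset.sum_congr rfl fun v _ => ?_
    rw [Finset.sum_const, SimpleGraph.card_neighborFinset_eq_degree, nsmul_eq_mul]
  rw [Finset.sum_sub_distrib, ← Finset.mul_sum, hmix, hdiag, hmix', hdiag', sub_self]


set_option maxHeartbeats 1000000 in
private lemma habs (a β p κ s c ν ω : ℂ) (hs : s ≠ 0) (hν : ν ≠ 0) (hω : ω ≠ 0)
    (hpyth : s^2 + c^2 = 1) :
    (a * p * (1/2 + s * c / (2*ν))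
      + (a * κ + β * p) * (s^2 / (2*ν))
      + β * κ * (1/2 - s * c / (2*ν)))
    - (a * p * (1/2 + s * c / (2*ω))
      + (a * κ + β * p) * (s^2 / (2*ω))
      + β * κ * (1/2 - s * c / (2*ω)))
    = ((1/(2*ν) - 1/(2*ω)) / s)
      * (a * (s * κ + p * c) + (s * β + a * c) * p
          - c * (a * p + (s * β + a * c) * (s * κ + p * c))) := by
  field_simp
  linear_combination ((ω-ν)*(a*p*c + a*s*κ + p*s*β)) * hpyth

set_option maxHeartbeats 1000000 in
/-- Corollary `freqinc`: shifting the frequency from `ω` to `ω + 2mπ`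
leaves the mutual `L²(𝒢)` inner products of the constructed eigenfunctions unchanged. -/
theorem qgfft_freq_shift_inner_product
    {V : Type*} [Fintype V] [DecidableEq V]
    (G : SimpleGraph V) [DecidableRel G.Adj]
    (hdeg : ∀ v : V, 0 < G.degree v)
    {E : Type*} [Fintype E] (e₀ e₁ : E → V)
    (hadj : ∀ e : E, G.Adj (e₀ e) (e₁ e))
    (hinj : ∀ e e' : E, s(e₀ e, e₁ e) = s(e₀ e', e₁ e') → e = e')
    (hsurj : ∀ x ∈ G.edgeSet, ∃ e : E, s(e₀ e, e₁ e) = x)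
    (ω : ℝ) (hωpos : 0 < ω) (hω : Real.sin ω ≠ 0) (m : ℕ)
    (φ₁ φ₂ : V → ℂ)
    (hφ₁ : ∀ v : V, ∑ w ∈ G.neighborFinset v, φ₁ w
      = (Real.cos ω : ℂ) * (G.degree v : ℂ) * φ₁ v)
    (hφ₂ : ∀ v : V, ∑ w ∈ G.neighborFinset v, φ₂ w
      = (Real.cos ω : ℂ) * (G.degree v : ℂ) * φ₂ v) :
    ∑ e : E, ∫ x in (0:ℝ)..1,
        (φ₁ (e₀ e) * (Real.cos ((ω + 2 * m * Real.pi) * x) : ℂ)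
          + ((φ₁ (e₁ e) - φ₁ (e₀ e) * (Real.cos ω : ℂ)) / (Real.sin ω : ℂ))
            * (Real.sin ((ω + 2 * m * Real.pi) * x) : ℂ))
        * (starRingEnd ℂ)
          (φ₂ (e₀ e) * (Real.cos ((ω + 2 * m * Real.pi) * x) : ℂ)
            + ((φ₂ (e₁ e) - φ₂ (e₀ e) * (Real.cos ω : ℂ)) / (Real.sin ω : ℂ))
              * (Real.sin ((ω + 2 * m * Real.pi) * x) : ℂ))
    = ∑ e : E, ∫ x in (0:ℝ)..1,
        (φ₁ (e₀ e) * (Real.cos (ω * x) : ℂ)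
          + ((φ₁ (e₁ e) - φ₁ (e₀ e) * (Real.cos ω : ℂ)) / (Real.sin ω : ℂ))
            * (Real.sin (ω * x) : ℂ))
        * (starRingEnd ℂ)
          (φ₂ (e₀ e) * (Real.cos (ω * x) : ℂ)
            + ((φ₂ (e₁ e) - φ₂ (e₀ e) * (Real.cos ω : ℂ)) / (Real.sin ω : ℂ))
              * (Real.sin (ω * x) : ℂ)) := by
  have hπ := Real.pi_pos
  set ν : ℝ := ω + 2 * m * Real.pi with hνdef
  have hνpos : 0 < ν := by
    have h2 : (0:ℝ) ≤ 2 * m * Real.pi := by positivity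
    rw [hνdef]; linarith
  have hν0 : ν ≠ 0 := ne_of_gt hνpos
  have hω0 : ω ≠ 0 := ne_of_gt hωpos
  have hsν : Real.sin ν = Real.sin ω := by
    rw [hνdef, show ω + 2 * (m:ℝ) * Real.pi = ω + m * (2 * Real.pi) by ring,
      Real.sin_add_nat_mul_two_pi]
  have hcν : Real.cos ν = Real.cos ω := by
    rw [hνdef, show ω + 2 * (m:ℝ) * Real.pi = ω + m * (2 * Real.pi) by ring,
      Real.cos_add_nat_mul_two_pi]
  have key : ∀ (t : ℝ), t ≠ 0 →
      (∑ e : E, ∫ x in (0:ℝ)..1,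
        (φ₁ (e₀ e) * (Real.cos (t * x) : ℂ)
          + ((φ₁ (e₁ e) - φ₁ (e₀ e) * (Real.cos ω : ℂ)) / (Real.sin ω : ℂ))
            * (Real.sin (t * x) : ℂ))
        * (starRingEnd ℂ)
          (φ₂ (e₀ e) * (Real.cos (t * x) : ℂ)
            + ((φ₂ (e₁ e) - φ₂ (e₀ e) * (Real.cos ω : ℂ)) / (Real.sin ω : ℂ))
              * (Real.sin (t * x) : ℂ)))
      = ∑ e : E,
          (φ₁ (e₀ e) * (starRingEnd ℂ) (φ₂ (e₀ e))
              * ((1/2 + Real.sin t * Real.cos t / (2*t) : ℝ) : ℂ)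
            + (φ₁ (e₀ e) * (starRingEnd ℂ)
                  ((φ₂ (e₁ e) - φ₂ (e₀ e) * (Real.cos ω : ℂ)) / (Real.sin ω : ℂ))
                + ((φ₁ (e₁ e) - φ₁ (e₀ e) * (Real.cos ω : ℂ)) / (Real.sin ω : ℂ))
                  * (starRingEnd ℂ) (φ₂ (e₀ e)))
              * ((Real.sin t ^ 2 / (2*t) : ℝ) : ℂ)
            + ((φ₁ (e₁ e) - φ₁ (e₀ e) * (Real.cos ω : ℂ)) / (Real.sin ω : ℂ))
              * (starRingEnd ℂ)
                ((φ₂ (e₁ e) - φ₂ (e₀ e) * (Real.cos ω : ℂ)) / (Real.sin ω : ℂ))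
              * ((1/2 - Real.sin t * Real.cos t / (2*t) : ℝ) : ℂ)) := by
    intro t ht
    refine Finset.sum_congr rfl fun e _ => ?_
    have := int_main t ht (φ₁ (e₀ e))
      ((φ₁ (e₁ e) - φ₁ (e₀ e) * (Real.cos ω : ℂ)) / (Real.sin ω : ℂ))
      ((starRingEnd ℂ) (φ₂ (e₀ e)))
      ((starRingEnd ℂ) ((φ₂ (e₁ e) - φ₂ (e₀ e) * (Real.cos ω : ℂ)) / (Real.sin ω : ℂ)))
    rw [← this]
    refine intervalIntegral.integral_congr fun x _ => ?_
    simp only [map_add, map_mul, Complex.conj_ofReal]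
  rw [key ν hν0, key ω hω0, hsν, hcν]
  rw [← sub_eq_zero, ← Finset.sum_sub_distrib]
  have hS := keyS G e₀ e₁ hadj hinj hsurj ω φ₁ φ₂ hφ₂
  have hsC : (Real.sin ω : ℂ) ≠ 0 := Complex.ofReal_ne_zero.mpr hω
  have hpythC : (Real.sin ω : ℂ)^2 + (Real.cos ω : ℂ)^2 = 1 := by
    norm_cast
    exact Real.sin_sq_add_cos_sq ω
  have hνC : (ν : ℂ) ≠ 0 := Complex.ofReal_ne_zero.mpr hν0
  have hωC : (ω : ℂ) ≠ 0 := Complex.ofReal_ne_zero.mpr hω0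
  have hfac : ∀ e : E,
      (φ₁ (e₀ e) * (starRingEnd ℂ) (φ₂ (e₀ e))
          * ((1/2 + Real.sin ω * Real.cos ω / (2*ν) : ℝ) : ℂ)
        + (φ₁ (e₀ e) * (starRingEnd ℂ)
              ((φ₂ (e₁ e) - φ₂ (e₀ e) * (Real.cos ω : ℂ)) / (Real.sin ω : ℂ))
            + ((φ₁ (e₁ e) - φ₁ (e₀ e) * (Real.cos ω : ℂ)) / (Real.sin ω : ℂ))
              * (starRingEnd ℂ) (φ₂ (e₀ e)))
          * ((Real.sin ω ^ 2 / (2*ν) : ℝ) : ℂ)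
        + ((φ₁ (e₁ e) - φ₁ (e₀ e) * (Real.cos ω : ℂ)) / (Real.sin ω : ℂ))
          * (starRingEnd ℂ)
            ((φ₂ (e₁ e) - φ₂ (e₀ e) * (Real.cos ω : ℂ)) / (Real.sin ω : ℂ))
          * ((1/2 - Real.sin ω * Real.cos ω / (2*ν) : ℝ) : ℂ))
      - (φ₁ (e₀ e) * (starRingEnd ℂ) (φ₂ (e₀ e))
          * ((1/2 + Real.sin ω * Real.cos ω / (2*ω) : ℝ) : ℂ)
        + (φ₁ (e₀ e) * (starRingEnd ℂ)
              ((φ₂ (e₁ e) - φ₂ (e₀ e) * (Real.cos ω : ℂ)) / (Real.sin ω : ℂ))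
            + ((φ₁ (e₁ e) - φ₁ (e₀ e) * (Real.cos ω : ℂ)) / (Real.sin ω : ℂ))
              * (starRingEnd ℂ) (φ₂ (e₀ e)))
          * ((Real.sin ω ^ 2 / (2*ω) : ℝ) : ℂ)
        + ((φ₁ (e₁ e) - φ₁ (e₀ e) * (Real.cos ω : ℂ)) / (Real.sin ω : ℂ))
          * (starRingEnd ℂ)
            ((φ₂ (e₁ e) - φ₂ (e₀ e) * (Real.cos ω : ℂ)) / (Real.sin ω : ℂ))
          * ((1/2 - Real.sin ω * Real.cos ω / (2*ω) : ℝ) : ℂ))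
      = ((( 1/(2*ν) - 1/(2*ω)) / Real.sin ω : ℝ) : ℂ)
        * (φ₁ (e₀ e) * (starRingEnd ℂ) (φ₂ (e₁ e))
            + φ₁ (e₁ e) * (starRingEnd ℂ) (φ₂ (e₀ e))
            - (Real.cos ω : ℂ) * (φ₁ (e₀ e) * (starRingEnd ℂ) (φ₂ (e₀ e))
                + φ₁ (e₁ e) * (starRingEnd ℂ) (φ₂ (e₁ e)))) := by
    intro e
    simp only [map_div₀, map_sub, map_mul, Complex.conj_ofReal]
    have hb1 : (Real.sin ω : ℂ)
          * ((φ₁ (e₁ e) - φ₁ (e₀ e) * (Real.cos ω : ℂ)) / (Real.sin ω : ℂ))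
          + φ₁ (e₀ e) * (Real.cos ω : ℂ) = φ₁ (e₁ e) := by
      rw [mul_comm, div_mul_cancel₀ _ hsC, sub_add_cancel]
    have hb2 : (Real.sin ω : ℂ)
          * (((starRingEnd ℂ) (φ₂ (e₁ e))
              - (starRingEnd ℂ) (φ₂ (e₀ e)) * (Real.cos ω : ℂ)) / (Real.sin ω : ℂ))
          + (starRingEnd ℂ) (φ₂ (e₀ e)) * (Real.cos ω : ℂ)
        = (starRingEnd ℂ) (φ₂ (e₁ e)) := by
      rw [mul_comm, div_mul_cancel₀ _ hsC, sub_add_cancel]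
    have H := habs (φ₁ (e₀ e))
      ((φ₁ (e₁ e) - φ₁ (e₀ e) * (Real.cos ω : ℂ)) / (Real.sin ω : ℂ))
      ((starRingEnd ℂ) (φ₂ (e₀ e)))
      (((starRingEnd ℂ) (φ₂ (e₁ e))
          - (starRingEnd ℂ) (φ₂ (e₀ e)) * (Real.cos ω : ℂ)) / (Real.sin ω : ℂ))
      (Real.sin ω : ℂ) (Real.cos ω : ℂ) (ν : ℂ) (ω : ℂ) hsC hνC hωC hpythC
    rw [hb1, hb2] at H
    push_cast at H ⊢
    linear_combination H
  rw [Finset.sum_congr rfl fun e _ => hfac e, ← Finset.mul_sum, hS, mul_zero]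
end

section
/- Let ω ∈ ℝ with ω > 0 and sin ω ≠ 0, and let f : V → ℂ. For each ordered pair of adjacent vertices (v, w) define y_{v,w}(x) = f(v)·cos(ωx) + ((f(w) − f(v)·cos ω)/sin ω)·sin(ωx). Then the Kirchhoff derivative condition Σ_{w ~ v} y′_{v,w}(0) = 0 holds at every vertex v if and only if f is a vertex eigenfunction of frequency ω, i.e. Σ_{w ~ v} f(w) = cos(ω)·deg(v)·f(v) for every vertex v. -/
open scoped BigOperators

lemma qgfft_deriv_aux (ω : ℝ) (a c : ℂ) :
    deriv (fun x : ℝ =>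
      a * (Real.cos (ω * x) : ℂ) + c * (Real.sin (ω * x) : ℂ)) 0 = c * ω := by
  have hc : HasDerivAt (fun x : ℝ => (Real.cos (ω * x) : ℂ)) 0 0 := by
    have : HasDerivAt (fun x : ℝ => Real.cos (ω * x))
        (-Real.sin (ω * 0) * ω) 0 :=
      (Real.hasDerivAt_cos (ω * 0)).comp 0 (by simpa using (hasDerivAt_id (0:ℝ)).const_mul ω)
    simpa using this.ofReal_comp
  have hs : HasDerivAt (fun x : ℝ => (Real.sin (ω * x) : ℂ)) ω 0 := by
    have : HasDerivAt (fun x : ℝ => Real.sin (ω * x))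
        (Real.cos (ω * 0) * ω) 0 :=
      (Real.hasDerivAt_sin (ω * 0)).comp 0 (by simpa using (hasDerivAt_id (0:ℝ)).const_mul ω)
    simpa using this.ofReal_comp
  have h := ((hc.const_mul a).add (hs.const_mul c))
  exact h.deriv.trans (by simp)

/-- the Kirchhoff derivative condition for the edgewise interpolating
functions holds at every vertex iff the vertex data is a vertex eigenfunction of
frequency `ω`. -/
theorem qgfft_kirchhoff_iff_vertex_eigenfunction
    {V : Type*} [Fintype V] [DecidableEq V]
    (G : SimpleGraph V) [DecidableRel G.Adj]
    (hdeg : ∀ v : V, 0 < G.degree v)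
    (ω : ℝ) (hωpos : 0 < ω) (hω : Real.sin ω ≠ 0)
    (f : V → ℂ) :
    (∀ v : V, ∑ w ∈ G.neighborFinset v,
        deriv (fun x : ℝ =>
          f v * (Real.cos (ω * x) : ℂ)
            + ((f w - f v * (Real.cos ω : ℂ)) / (Real.sin ω : ℂ))
              * (Real.sin (ω * x) : ℂ)) 0 = 0)
    ↔ (∀ v : V, ∑ w ∈ G.neighborFinset v, f w
        = (Real.cos ω : ℂ) * (G.degree v : ℂ) * f v) := by
  have hs : (Real.sin ω : ℂ) ≠ 0 := by
    simpa using Complex.ofReal_ne_zero.mpr hω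
  have hωC : (ω : ℂ) ≠ 0 := Complex.ofReal_ne_zero.mpr hωpos.ne'
  have key : ∀ v : V,
      (∑ w ∈ G.neighborFinset v,
        deriv (fun x : ℝ =>
          f v * (Real.cos (ω * x) : ℂ)
            + ((f w - f v * (Real.cos ω : ℂ)) / (Real.sin ω : ℂ))
              * (Real.sin (ω * x) : ℂ)) 0)
      = ((∑ w ∈ G.neighborFinset v, f w)
          - (Real.cos ω : ℂ) * (G.degree v : ℂ) * f v) / (Real.sin ω : ℂ) * ω := by
    intro v
    rw [Finset.sum_congr rfl (fun w _ => qgfft_deriv_aux ω (f v) _)]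
    rw [← Finset.sum_mul, ← Finset.sum_div, Finset.sum_sub_distrib]
    rw [Finset.sum_const, SimpleGraph.card_neighborFinset_eq_degree]
    ring
  constructor
  · intro h v
    have := (key v).symm.trans (h v)
    have h2 : (∑ w ∈ G.neighborFinset v, f w)
        - (Real.cos ω : ℂ) * (G.degree v : ℂ) * f v = 0 := by
      have := mul_eq_zero.mp this
      rcases this with h3 | h3
      · exact (div_eq_zero_iff.mp h3).resolve_right hs
      · exact absurd h3 hωC
    linear_combination h2
  · intro h v
    rw [key v, h v]
    simp
end
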